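/- Let α > 2 and K > 0 be real constants. Let f : [0,∞) → ℝ be continuous with |f(ρ) − 1| ≤ K·e^{−αρ} and f(ρ) ≥ 1/4 for all ρ ≥ 0. Let y : [0,∞) → ℝ be differentiable with y′(ρ) + y(ρ)² = f(ρ) for all ρ ≥ 0 and y(0) > 0. Then there exists a constant C₂ > 0, depending only on K, α and y(0), such that |y(ρ) − 1| ≤ C₂·e^{−ρ} for all ρ ≥ 0. -/

import Mathlib

/-- **Claim 2 in the proof of Lemma 2.3.** A solution of the Riccati equation
`y' + y² = f` with `f ≥ 1/4`, `|f - 1| ≤ K·exp(-αρ)` (`α > 2`) and `y 0 = y₀ > 0`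
satisfies the preliminary decay estimate `|y ρ - 1| ≤ C₂·exp(-ρ)`, with `C₂ > 0`
depending only on `K`, `α` and `y₀`. -/
theorem riccati_preliminary_decay (α K y₀ : ℝ) (hα : 2 < α) (hK : 0 < K) (hy₀ : 0 < y₀) :
    ∃ C₂ > 0, ∀ f y : ℝ → ℝ,
      ContinuousOn f (Set.Ici 0) →
      (∀ ρ ≥ (0:ℝ), |f ρ - 1| ≤ K * Real.exp (-α * ρ)) →
      (∀ ρ ≥ (0:ℝ), 1/4 ≤ f ρ) →
      (∀ ρ ≥ (0:ℝ), HasDerivAt y (f ρ - (y ρ)^2) ρ) →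
      y 0 = y₀ →
      ∀ ρ ≥ (0:ℝ), |y ρ - 1| ≤ C₂ * Real.exp (-ρ) := by
  set M : ℝ := max y₀ (Real.sqrt (1 + K)) + 1 with hMdef
  have hsq : Real.sqrt (1 + K) ^ 2 = 1 + K := Real.sq_sqrt (by linarith)
  have hsle : Real.sqrt (1 + K) ≤ M - 1 := by
    simp [hMdef]
  have hM2 : 1 + K < M ^ 2 := by
    have h0 : (0:ℝ) ≤ Real.sqrt (1 + K) := Real.sqrt_nonneg _
    nlinarith
  have hMy : y₀ ≤ M := by
    have := le_max_left y₀ (Real.sqrt (1 + K)); simp [hMdef]; linarith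
  have hM0 : 0 < M := by
    have h0 : (0:ℝ) ≤ Real.sqrt (1 + K) := Real.sqrt_nonneg _
    have := le_max_right y₀ (Real.sqrt (1 + K)); simp [hMdef]; linarith
  set c₃ : ℝ := 2 * (M + 1) * K / (α - 2) with hc₃def
  have hc₃pos : 0 < c₃ := by
    apply div_pos (by nlinarith) (by linarith)
  set C₂ : ℝ := Real.sqrt ((y₀ - 1) ^ 2 + c₃) with hC₂def
  have hC₂pos : 0 < C₂ := Real.sqrt_pos.2 (by nlinarith [sq_nonneg (y₀ - 1)])
  have hC₂sq : C₂ ^ 2 = (y₀ - 1) ^ 2 + c₃ :=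
    Real.sq_sqrt (by nlinarith [sq_nonneg (y₀ - 1)])
  refine ⟨C₂, hC₂pos, ?_⟩
  intro f y hfc hfK hf4 hy hy0 ρ hρ
  -- continuity of y on [0, ρ]
  have hyc : ∀ ρ' ≥ (0:ℝ), ContinuousOn y (Set.Icc 0 ρ') := fun ρ' _ x hx =>
    ((hy x hx.1).continuousAt).continuousWithinAt
  -- lower bound: 0 ≤ y on [0, ∞)
  have hlow : ∀ t ≥ (0:ℝ), 0 ≤ y t := by
    intro t ht
    have key : ∀ ⦃x⦄, x ∈ Set.Icc 0 t → -y x ≤ (fun _ => (0:ℝ)) x := by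
      apply image_le_of_deriv_right_lt_deriv_boundary
        (f := fun s => -y s) (f' := fun s => (y s) ^ 2 - f s)
        (B := fun _ => (0:ℝ)) (B' := fun _ => (0:ℝ))
      · exact (hyc t ht).neg
      · intro x hx
        have h := ((hy x hx.1).hasDerivWithinAt (s := Set.Ici x)).neg
        rw [neg_sub] at h; exact h
      · simp [hy0]; linarith
      · intro x; exact hasDerivAt_const x 0
      · intro x hx hcontact
        have hyx : y x = 0 := by simpa [neg_eq_zero] using hcontact
        have := hf4 x hx.1
        simp only [hyx]
        nlinarith
    have := key (Set.right_mem_Icc.2 ht)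
    simpa using this
  -- upper bound: y ≤ M on [0, ∞)
  have hup : ∀ t ≥ (0:ℝ), y t ≤ M := by
    intro t ht
    have key : ∀ ⦃x⦄, x ∈ Set.Icc 0 t → y x ≤ (fun _ => M) x := by
      apply image_le_of_deriv_right_lt_deriv_boundary
        (f := y) (f' := fun s => f s - (y s) ^ 2)
        (B := fun _ => M) (B' := fun _ => (0:ℝ))
      · exact hyc t ht
      · intro x hx; exact (hy x hx.1).hasDerivWithinAt
      · simp [hy0, hMy]
      · intro x; exact hasDerivAt_const x M
      · intro x hx hcontact
        have hfx : f x - 1 ≤ K * Real.exp (-α * x) :=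
          (abs_le.1 (hfK x hx.1)).2
        have hex : Real.exp (-α * x) ≤ 1 := by
          apply Real.exp_le_one_iff.2
          nlinarith [hx.1]
        have : f x ≤ 1 + K := by nlinarith
        simp only [hcontact]
        nlinarith
    exact key (Set.right_mem_Icc.2 ht)
  -- the Lyapunov function
  set φ : ℝ → ℝ := fun t => (y t - 1) ^ 2 * Real.exp (2 * t) + c₃ * Real.exp ((2 - α) * t)
    with hφdef
  set D : ℝ → ℝ := fun x =>
    (2 * (y x - 1) * (f x - (y x) ^ 2)) * Real.exp (2 * x)
      + (y x - 1) ^ 2 * (Real.exp (2 * x) * 2)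
      + c₃ * (Real.exp ((2 - α) * x) * (2 - α)) with hDdef
  have hDer : ∀ x ≥ (0:ℝ), HasDerivAt φ (D x) x := by
    intro x hx
    have h1 : HasDerivAt (fun t => (y t - 1) ^ 2) (2 * (y x - 1) * (f x - (y x) ^ 2)) x := by
      have := (((hy x hx).sub_const 1).pow 2)
      convert this using 1
      · rfl
      · rfl
      · rfl
      simp
      try ring
    have h2 : HasDerivAt (fun t => Real.exp (2 * t)) (Real.exp (2 * x) * 2) x := by
      have ha : HasDerivAt (fun t : ℝ => 2 * t) 2 x := by
        simpa using (hasDerivAt_id x).const_mul 2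
      exact ha.exp
    have h3 : HasDerivAt (fun t => Real.exp ((2 - α) * t)) (Real.exp ((2 - α) * x) * (2 - α)) x := by
      have ha : HasDerivAt (fun t : ℝ => (2 - α) * t) (2 - α) x := by
        simpa using (hasDerivAt_id x).const_mul (2 - α)
      exact ha.exp
    exact (h1.mul h2).add (h3.const_mul c₃)
  -- D ≤ 0 on [0, ∞)
  have hDle : ∀ x ≥ (0:ℝ), D x ≤ 0 := by
    intro x hx
    have hyl := hlow x hx
    have hyu := hup x hx
    have hgabs : |y x - 1| ≤ M + 1 := abs_le.2 ⟨by linarith, by linarith⟩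
    have hfabs := hfK x hx
    have hexm : (0:ℝ) < Real.exp (-α * x) := Real.exp_pos _
    have h1 : 2 * (y x - 1) * (f x - 1) ≤ 2 * (M + 1) * (K * Real.exp (-α * x)) := by
      have habs : (y x - 1) * (f x - 1) ≤ |y x - 1| * |f x - 1| := by
        calc (y x - 1) * (f x - 1) ≤ |(y x - 1) * (f x - 1)| := le_abs_self _
          _ = |y x - 1| * |f x - 1| := abs_mul _ _
      have h2 : |y x - 1| * |f x - 1| ≤ (M + 1) * (K * Real.exp (-α * x)) :=
        mul_le_mul hgabs hfabs (abs_nonneg _) (by linarith)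
      nlinarith
    have hyg : 0 ≤ y x * (y x - 1) ^ 2 := mul_nonneg hyl (sq_nonneg _)
    have key : 2 * (y x - 1) * (f x - (y x) ^ 2) + 2 * (y x - 1) ^ 2
        ≤ 2 * (M + 1) * (K * Real.exp (-α * x)) := by
      have hid : 2 * (y x - 1) * (f x - (y x) ^ 2) + 2 * (y x - 1) ^ 2
          = 2 * (y x - 1) * (f x - 1) - 2 * (y x * (y x - 1) ^ 2) := by ring
      linarith [hid.le, hid.ge]
    have hexp2 : (0:ℝ) < Real.exp (2 * x) := Real.exp_pos _
    have hsplit : Real.exp ((2 - α) * x) = Real.exp (2 * x) * Real.exp (-α * x) := by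
      rw [← Real.exp_add]; ring_nf
    have hc : c₃ * (2 - α) = -(2 * (M + 1) * K) := by
      have hne : α - 2 ≠ 0 := by linarith
      rw [hc₃def]; field_simp; try ring
    have hmul := mul_le_mul_of_nonneg_left key hexp2.le
    calc D x = Real.exp (2 * x) * (2 * (y x - 1) * (f x - (y x) ^ 2) + 2 * (y x - 1) ^ 2)
          + (c₃ * (2 - α)) * Real.exp ((2 - α) * x) := by rw [hDdef]; ring
      _ ≤ Real.exp (2 * x) * (2 * (M + 1) * (K * Real.exp (-α * x)))
          + (-(2 * (M + 1) * K)) * (Real.exp (2 * x) * Real.exp (-α * x)) := by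
          rw [hc, hsplit]; linarith
      _ = 0 := by ring
  -- φ is nonincreasing: φ ρ ≤ φ 0
  have hφle : φ ρ ≤ φ 0 := by
    have key : ∀ ⦃x⦄, x ∈ Set.Icc 0 ρ → φ x ≤ (fun _ => φ 0) x := by
      apply image_le_of_deriv_right_le_deriv_boundary
        (f := φ) (f' := D) (B := fun _ => φ 0) (B' := fun _ => (0:ℝ))
      · intro x hx; exact (hDer x hx.1).continuousAt.continuousWithinAt
      · intro x hx; exact (hDer x hx.1).hasDerivWithinAt
      · exact le_refl _
      · exact continuousOn_const
      · intro x hx; exact (hasDerivAt_const x (φ 0)).hasDerivWithinAt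
      · intro x hx; exact hDle x hx.1
    exact key (Set.right_mem_Icc.2 hρ)
  have hφ0 : φ 0 = (y₀ - 1) ^ 2 + c₃ := by
    simp [hφdef, hy0]
  -- conclude
  have hw : (y ρ - 1) ^ 2 * Real.exp (2 * ρ) ≤ C₂ ^ 2 := by
    have hpos : 0 < c₃ * Real.exp ((2 - α) * ρ) := mul_pos hc₃pos (Real.exp_pos _)
    have : φ ρ = (y ρ - 1) ^ 2 * Real.exp (2 * ρ) + c₃ * Real.exp ((2 - α) * ρ) := rfl
    rw [hC₂sq]
    linarith [hφle, hφ0.le, hφ0.ge]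
  have hsq2 : (|y ρ - 1| * Real.exp ρ) ^ 2 = (y ρ - 1) ^ 2 * Real.exp (2 * ρ) := by
    rw [mul_pow, sq_abs, ← Real.exp_nat_mul]
    norm_num [mul_comm]
  have hle : |y ρ - 1| * Real.exp ρ ≤ C₂ := by
    have h1 : (|y ρ - 1| * Real.exp ρ) ^ 2 ≤ C₂ ^ 2 := by rw [hsq2]; exact hw
    have h2 : 0 ≤ |y ρ - 1| * Real.exp ρ := mul_nonneg (abs_nonneg _) (Real.exp_pos _).le
    have h3 := Real.sqrt_le_sqrt h1
    rwa [Real.sqrt_sq h2, Real.sqrt_sq hC₂pos.le] at h3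
  have hmul := mul_le_mul_of_nonneg_right hle (Real.exp_pos (-ρ)).le
  have hee : Real.exp ρ * Real.exp (-ρ) = 1 := by
    rw [← Real.exp_add]; simp
  calc |y ρ - 1| = |y ρ - 1| * (Real.exp ρ * Real.exp (-ρ)) := by rw [hee, mul_one]
    _ = |y ρ - 1| * Real.exp ρ * Real.exp (-ρ) := by ring
    _ ≤ C₂ * Real.exp (-ρ) := hmul
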